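/- Let Q(x,y)=ax²+hxy+by² be an indefinite integer binary quadratic form whose discriminant D=h²−4ab is positive and not a perfect square, and let α ∈ (0,∞) be an irrational root of Q(α,1)=0 with continued fraction expansion α=[c₀;c₁,c₂,…]. Then along the associated word w_α (the path leading to the end of the Conway river of Q) the values of Q have zero growth: Λ_Q(w_α) = 0. -/

import Mathlib

open Filter Matrix

noncomputable section

def Lm : Matrix (Fin 2) (Fin 2) ℤ := !![1, 1; 0, 1]

def Rm : Matrix (Fin 2) (Fin 2) ℤ := !![1, 0; 1, 1]

/-- `pathMat w n = w 0 * w 1 * ⋯ * w (n-1)`. -/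
def pathMat (w : ℕ → Matrix (Fin 2) (Fin 2) ℤ) (n : ℕ) : Matrix (Fin 2) (Fin 2) ℤ :=
  ((List.range n).map w).prod

/-- The value of the form `a x² + h x y + b y²`. -/
def Qval (a h b x y : ℤ) : ℤ := a * x ^ 2 + h * x * y + b * y ^ 2

/-- `|Qₙ(w)| = max(|aₙ|, |bₙ|, |cₙ|)` where the values are taken at the n-th superbase. -/
def Qnorm (a h b : ℤ) (w : ℕ → Matrix (Fin 2) (Fin 2) ℤ) (n : ℕ) : ℤ :=
  max |Qval a h b (pathMat w n 0 0) (pathMat w n 1 0)|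
    (max |Qval a h b (pathMat w n 0 1) (pathMat w n 1 1)|
      |Qval a h b (pathMat w n 0 0 + pathMat w n 0 1) (pathMat w n 1 0 + pathMat w n 1 1)|)

/-- The Lyapunov exponent `Λ_Q(w)` of the values of `Q` along the path `w`. -/
def LyapQ (a h b : ℤ) (w : ℕ → Matrix (Fin 2) (Fin 2) ℤ) : ℝ :=
  limsup (fun n : ℕ => Real.log (Qnorm a h b w n : ℝ) / (n : ℝ)) atTop

/-- The matrix Lyapunov exponent `Λ(w)`, via the spectral radius over ℂ. -/
def Lyap (w : ℕ → Matrix (Fin 2) (Fin 2) ℤ) : ℝ :=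
  limsup (fun n : ℕ =>
    Real.log ((spectralRadius ℂ ((pathMat w n).map ((↑) : ℤ → ℂ))).toReal) / (n : ℝ)) atTop

/-- The Gauss map iterates of `α`. -/
def cfXi (α : ℝ) : ℕ → ℝ
  | 0 => α
  | n + 1 => 1 / Int.fract (cfXi α n)

/-- The `n`-th partial quotient of `α`. -/
def cfA (α : ℝ) (n : ℕ) : ℤ := ⌊cfXi α n⌋

/-- The word consisting of `c 0` copies of `L`, then `c 1` copies of `R`, then `c 2`
copies of `L`, and so on. -/
def wordOf (c : ℕ → ℕ) (n : ℕ) : Matrix (Fin 2) (Fin 2) ℤ :=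
  if Nat.findGreatest (fun k => ∑ i ∈ Finset.range k, c i ≤ n) (n + 1) % 2 = 0 then Lm else Rm

/-- The word `w_α` associated to the continued fraction expansion of `α`. -/
def wordOfCF (α : ℝ) : ℕ → Matrix (Fin 2) (Fin 2) ℤ :=
  wordOf (fun n => (cfA α n).toNat)

/-! ### Continued fraction lemmas -/

section CF
variable {α : ℝ} (hpos : 0 < α) (hirr : Irrational α)
include hpos hirr

omit hpos in
lemma xi_irr : ∀ n, Irrational (cfXi α n)
  | 0 => hirr
  | n + 1 => by
    have ih := xi_irr n
    have hfr : Irrational (Int.fract (cfXi α n)) := by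
      unfold Int.fract; exact ih.sub_intCast _
    rw [cfXi, one_div]; exact hfr.inv

omit hpos in
lemma fract_xi_pos (n : ℕ) : 0 < Int.fract (cfXi α n) := by
  rcases (Int.fract_nonneg (cfXi α n)).lt_or_eq with h | h
  · exact h
  · exfalso
    have : Int.fract (cfXi α n) ≠ 0 := by
      rw [Int.fract]
      exact sub_ne_zero.mpr ((xi_irr hirr n).ne_int ⌊cfXi α n⌋)
    exact this h.symm

omit hpos in
lemma xi_gt_one (n : ℕ) : 1 < cfXi α (n + 1) := by
  rw [cfXi]
  have h1 := fract_xi_pos hirr n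
  have h2 := Int.fract_lt_one (cfXi α n)
  rw [lt_div_iff₀ h1, one_mul]; exact h2

lemma xi_pos : ∀ n, 0 < cfXi α n
  | 0 => hpos
  | n + 1 => lt_trans one_pos (xi_gt_one hirr n)

lemma cfA_nonneg (n : ℕ) : 0 ≤ cfA α n :=
  Int.floor_nonneg.mpr (le_of_lt (xi_pos hpos hirr n))

/-- partial quotients as naturals -/
def cN (α : ℝ) (n : ℕ) : ℕ := (cfA α n).toNat

lemma cN_cast (n : ℕ) : (cN α n : ℝ) = ((⌊cfXi α n⌋ : ℤ) : ℝ) := by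
  have h := cfA_nonneg hpos hirr n
  unfold cN
  have : ((cfA α n).toNat : ℤ) = cfA α n := Int.toNat_of_nonneg h
  unfold cfA at this ⊢
  exact_mod_cast congrArg (fun z : ℤ => (z : ℝ)) this

omit hpos in
lemma cN_pos (n : ℕ) : 1 ≤ cN α (n + 1) := by
  unfold cN
  have : (1 : ℤ) ≤ cfA α (n + 1) := by
    unfold cfA
    exact Int.le_floor.mpr (by exact_mod_cast le_of_lt (xi_gt_one hirr n))
  omega

lemma xi_sub_cN (n : ℕ) : cfXi α n - (cN α n : ℝ) = Int.fract (cfXi α n) := by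
  rw [cN_cast hpos hirr, Int.fract]

omit hpos in
lemma xi_succ_mul (n : ℕ) : cfXi α (n + 1) * Int.fract (cfXi α n) = 1 := by
  rw [cfXi, one_div, inv_mul_cancel₀ (ne_of_gt (fract_xi_pos hirr n))]

end CF

/-! ### Block structure lemmas -/

section SK
variable (c : ℕ → ℕ)

def Sb (k : ℕ) : ℕ := ∑ i ∈ Finset.range k, c i

def Kb (n : ℕ) : ℕ := Nat.findGreatest (fun k => Sb c k ≤ n) (n + 1)

lemma Sb_mono : Monotone (Sb c) := by
  intro i j hij
  exact Finset.sum_le_sum_of_subset (Finset.range_subset_range.mpr hij)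

lemma Sb_succ (k : ℕ) : Sb c (k + 1) = Sb c k + c k := by
  rw [Sb, Sb, Finset.sum_range_succ]

variable (hc : ∀ i, 1 ≤ i → 1 ≤ c i)

include hc in
lemma Sb_lb (k : ℕ) : k ≤ Sb c (k + 1) := by
  induction k with
  | zero => omega
  | succ m ih =>
    have h1 := Sb_succ c (m + 1)
    have := hc (m + 1) (by omega)
    omega

include hc in
lemma Kb_spec (n : ℕ) : Sb c (Kb c n) ≤ n ∧ n < Sb c (Kb c n + 1) := by
  have hK : Sb c (Kb c n) ≤ n :=
    Nat.findGreatest_spec (P := fun k => Sb c k ≤ n) (n := n + 1) (m := 0)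
      (Nat.zero_le _) (by simp [Sb])
  refine ⟨hK, ?_⟩
  by_cases hb : Kb c n + 1 ≤ n + 1
  · by_contra hcon
    push_neg at hcon
    exact Nat.findGreatest_is_greatest (P := fun k => Sb c k ≤ n)
      (n := n + 1) (Nat.lt_succ_self _) hb hcon
  · have hKn : Kb c n = n + 1 := by
      have := Nat.findGreatest_le (P := fun k => Sb c k ≤ n) (n + 1)
      unfold Kb; unfold Kb at hb; omega
    rw [hKn]
    have h2 := Sb_lb c hc (n + 1)
    omega

include hc in
lemma Kb_eq (k n : ℕ) (h1 : Sb c k ≤ n) (h2 : n < Sb c (k + 1)) : Kb c n = k := by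
  have hspec := Kb_spec c hc n
  rcases lt_trichotomy (Kb c n) k with h | h | h
  · exfalso
    have : Sb c (Kb c n + 1) ≤ Sb c k := Sb_mono c (by omega)
    omega
  · exact h
  · exfalso
    have : Sb c (k + 1) ≤ Sb c (Kb c n) := Sb_mono c (by omega)
    omega

end SK

/-! ### Path matrix lemmas -/

lemma wordOf_eq (c : ℕ → ℕ) (n : ℕ) :
    wordOf c n = if Kb c n % 2 = 0 then Lm else Rm := rfl

lemma pathMat_zero (w : ℕ → Matrix (Fin 2) (Fin 2) ℤ) : pathMat w 0 = 1 := by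
  simp [pathMat]

lemma pathMat_succ (w : ℕ → Matrix (Fin 2) (Fin 2) ℤ) (n : ℕ) :
    pathMat w (n + 1) = pathMat w n * w n := by
  rw [pathMat, pathMat, List.range_succ, List.map_append, List.prod_append]
  simp

lemma mul_L (A : Matrix (Fin 2) (Fin 2) ℤ) :
    (A * Lm) 0 0 = A 0 0 ∧ (A * Lm) 0 1 = A 0 0 + A 0 1 ∧
    (A * Lm) 1 0 = A 1 0 ∧ (A * Lm) 1 1 = A 1 0 + A 1 1 := by
  refine ⟨?_, ?_, ?_, ?_⟩ <;> simp [Lm, Matrix.mul_apply, Fin.sum_univ_two]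

lemma mul_R (A : Matrix (Fin 2) (Fin 2) ℤ) :
    (A * Rm) 0 0 = A 0 0 + A 0 1 ∧ (A * Rm) 0 1 = A 0 1 ∧
    (A * Rm) 1 0 = A 1 0 + A 1 1 ∧ (A * Rm) 1 1 = A 1 1 := by
  refine ⟨?_, ?_, ?_, ?_⟩ <;> simp [Rm, Matrix.mul_apply, Fin.sum_univ_two]

lemma pathMat_entries (c : ℕ → ℕ) (n : ℕ) :
    (∀ i j, 0 ≤ pathMat (wordOf c) n i j) ∧ 1 ≤ pathMat (wordOf c) n 1 1 := by
  induction n with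
  | zero =>
    rw [pathMat_zero]
    constructor
    · intro i j; fin_cases i <;> fin_cases j <;> simp
    · simp
  | succ m ih =>
    obtain ⟨h1, h2⟩ := ih
    rw [pathMat_succ]
    have hgen : ∀ i j, 0 ≤ (pathMat (wordOf c) m * wordOf c m) i j := by
      intro i j
      rw [Matrix.mul_apply]
      refine Finset.sum_nonneg fun k _ => mul_nonneg (h1 i k) ?_
      rw [wordOf_eq]
      rcases ite_eq_or_eq (Kb c m % 2 = 0) Lm Rm with hL | hR <;>
        [rw [hL]; rw [hR]] <;> fin_cases k <;> fin_cases j <;> simp [Lm, Rm]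
    refine ⟨hgen, ?_⟩
    rw [wordOf_eq]
    rcases ite_eq_or_eq (Kb c m % 2 = 0) Lm Rm with hL | hR
    · rw [hL]
      obtain ⟨e1, e2, e3, e4⟩ := mul_L (pathMat (wordOf c) m)
      rw [e4]; linarith [h1 1 0]
    · rw [hR]
      obtain ⟨e1, e2, e3, e4⟩ := mul_R (pathMat (wordOf c) m)
      rw [e4]; exact h2

lemma pathMat_det (c : ℕ → ℕ) (n : ℕ) :
    pathMat (wordOf c) n 0 0 * pathMat (wordOf c) n 1 1
      - pathMat (wordOf c) n 0 1 * pathMat (wordOf c) n 1 0 = 1 := by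
  have hdet : ∀ n, (pathMat (wordOf c) n).det = 1 := by
    intro n
    induction n with
    | zero => rw [pathMat_zero]; simp
    | succ m ih =>
      rw [pathMat_succ, Matrix.det_mul, ih, one_mul, wordOf_eq]
      rcases ite_eq_or_eq (Kb c m % 2 = 0) Lm Rm with hL | hR
      · rw [hL]; simp [Lm, Matrix.det_fin_two_of]
      · rw [hR]; simp [Rm, Matrix.det_fin_two_of]
  have := hdet n
  rw [Matrix.det_fin_two] at this
  linarith

/-! ### The side values along the path -/

/-- `f` value: `p - α r` at the first column. -/
def fv (α : ℝ) (c : ℕ → ℕ) (n : ℕ) : ℝ :=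
  (pathMat (wordOf c) n 0 0 : ℝ) - α * (pathMat (wordOf c) n 1 0 : ℝ)

/-- `-g` value: `α s - q` at the second column. -/
def gv (α : ℝ) (c : ℕ → ℕ) (n : ℕ) : ℝ :=
  α * (pathMat (wordOf c) n 1 1 : ℝ) - (pathMat (wordOf c) n 0 1 : ℝ)

lemma fv_gv_succ_L (α : ℝ) (c : ℕ → ℕ) (n : ℕ) (hL : Kb c n % 2 = 0) :
    fv α c (n + 1) = fv α c n ∧ gv α c (n + 1) = gv α c n - fv α c n := by
  obtain ⟨e1, e2, e3, e4⟩ := mul_L (pathMat (wordOf c) n)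
  unfold fv gv
  rw [pathMat_succ, wordOf_eq, if_pos hL, e1, e2, e3, e4]
  push_cast
  constructor <;> ring

lemma fv_gv_succ_R (α : ℝ) (c : ℕ → ℕ) (n : ℕ) (hR : ¬ Kb c n % 2 = 0) :
    fv α c (n + 1) = fv α c n - gv α c n ∧ gv α c (n + 1) = gv α c n := by
  obtain ⟨e1, e2, e3, e4⟩ := mul_R (pathMat (wordOf c) n)
  unfold fv gv
  rw [pathMat_succ, wordOf_eq, if_neg hR, e1, e2, e3, e4]
  push_cast
  constructor <;> ring

/-! ### The main invariant -/

lemma main_inv (α : ℝ) (hpos : 0 < α) (hirr : Irrational α) (n : ℕ) :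
    0 < fv α (cN α) n ∧ 0 < gv α (cN α) n ∧
    (if Kb (cN α) n % 2 = 0
      then gv α (cN α) n
        = (cfXi α (Kb (cN α) n) - ((n : ℝ) - (Sb (cN α) (Kb (cN α) n) : ℝ))) * fv α (cN α) n
      else fv α (cN α) n
        = (cfXi α (Kb (cN α) n) - ((n : ℝ) - (Sb (cN α) (Kb (cN α) n) : ℝ))) * gv α (cN α) n) := by
  set c : ℕ → ℕ := cN α with hcdef
  have hc : ∀ i, 1 ≤ i → 1 ≤ c i := by
    intro i hi
    match i, hi with
    | m + 1, _ => exact cN_pos hirr m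
  induction n with
  | zero =>
    have hf0 : fv α c 0 = 1 := by unfold fv; rw [pathMat_zero]; simp
    have hg0 : gv α c 0 = α := by unfold gv; rw [pathMat_zero]; simp
    by_cases h0 : 1 ≤ c 0
    · have hK : Kb c 0 = 0 := by
        refine Kb_eq c hc 0 0 (by simp [Sb]) ?_
        rw [Sb_succ]
        simp [Sb]; omega
      rw [hK]
      refine ⟨by rw [hf0]; norm_num, by rw [hg0]; exact hpos, ?_⟩
      rw [if_pos (by norm_num)]
      rw [hf0, hg0]
      simp [Sb, cfXi]
    · have hc0 : c 0 = 0 := by omega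
      have hK : Kb c 0 = 1 := by
        refine Kb_eq c hc 1 0 (by simp [Sb, Finset.sum_range_one, hc0]) ?_
        have h1 := hc 1 (le_refl 1)
        rw [Sb_succ, Sb_succ]
        simp [Sb, hc0]
        omega
      rw [hK]
      refine ⟨by rw [hf0]; norm_num, by rw [hg0]; exact hpos, ?_⟩
      rw [if_neg (by norm_num)]
      rw [hf0, hg0]
      have hfl : Int.fract (cfXi α 0) = α := by
        have : cfA α 0 = 0 := by
          have h1 := cfA_nonneg hpos hirr 0
          have h2 : (cfA α 0).toNat = 0 := hc0
          omega
        unfold cfA at this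
        rw [show cfXi α 0 = α from rfl] at this ⊢
        rw [Int.fract, this]
        simp
      have hx := xi_succ_mul hirr 0
      rw [hfl] at hx
      have hSb1 : (Sb c 1 : ℝ) = 0 := by
        simp [Sb, Finset.sum_range_one, hc0]
      rw [hSb1]
      push_cast
      linarith [hx]
  | succ n ih =>
    obtain ⟨hfpos, hgpos, hinv⟩ := ih
    set k := Kb c n with hk
    have hspec := Kb_spec c hc n
    rw [← hk] at hspec
    have hckpos : 1 ≤ c k := by
      have h1 := hspec.1
      have h2 := hspec.2
      rw [Sb_succ] at h2
      omega
    set u : ℝ := cfXi α k - ((n : ℝ) - (Sb c k : ℝ)) with hu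
    have hjub : (n : ℝ) - (Sb c k : ℝ) ≤ (c k : ℝ) - 1 := by
      have h1 : n + 1 ≤ Sb c k + c k := by
        have := hspec.2; rw [Sb_succ] at this; omega
      have h2 : ((n : ℝ) + 1) ≤ (Sb c k : ℝ) + (c k : ℝ) := by exact_mod_cast h1
      linarith
    have hfr := fract_xi_pos hirr k
    have hsub : cfXi α k - (c k : ℝ) = Int.fract (cfXi α k) := by
      rw [hcdef]; exact xi_sub_cN hpos hirr k
    have hu1 : 1 < u := by
      rw [hu]
      have : cfXi α k - ((c k : ℝ) - 1) = Int.fract (cfXi α k) + 1 := by linarith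
      linarith
    have hx := xi_succ_mul hirr k
    by_cases heven : k % 2 = 0
    · -- letter L
      obtain ⟨hfs, hgs⟩ := fv_gv_succ_L α c n heven
      have hrel : gv α c n = u * fv α c n := by
        have := hinv; rw [if_pos heven] at this; exact this
      have hfpos' : 0 < fv α c (n + 1) := by rw [hfs]; exact hfpos
      have hgpos' : 0 < gv α c (n + 1) := by
        rw [hgs, hrel]
        have : (u - 1) * fv α c n > 0 := mul_pos (by linarith) hfpos
        linarith
      refine ⟨hfpos', hgpos', ?_⟩
      by_cases hnext : n + 1 < Sb c (k + 1)
      · have hK' : Kb c (n + 1) = k := Kb_eq c hc k (n + 1) (le_trans hspec.1 (Nat.le_succ n)) hnext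
        rw [hK', if_pos heven, hfs, hgs, hrel]
        push_cast
        ring
      · have hn1 : n + 1 = Sb c (k + 1) := by omega
        have hK' : Kb c (n + 1) = k + 1 := by
          refine Kb_eq c hc (k + 1) (n + 1) (le_of_eq hn1.symm) ?_
          rw [Sb_succ c (k + 1)]
          have := hc (k + 1) (by omega)
          omega
        have hodd1 : ¬ (k + 1) % 2 = 0 := by omega
        rw [hK', if_neg hodd1, hfs, hgs, hrel]
        have hcast : ((n : ℝ) + 1) = (Sb c (k + 1) : ℝ) := by exact_mod_cast congrArg (Nat.cast : ℕ → ℝ) hn1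
        have hjend : (n : ℝ) - (Sb c k : ℝ) = (c k : ℝ) - 1 := by
          have := Sb_succ c k
          have h2 : (Sb c (k+1) : ℝ) = (Sb c k : ℝ) + (c k : ℝ) := by exact_mod_cast this
          linarith
        have hfr2 : u - 1 = Int.fract (cfXi α k) := by rw [hu, hjend]; linarith
        push_cast
        rw [hcast]
        have : u * fv α c n - fv α c n = Int.fract (cfXi α k) * fv α c n := by
          rw [← hfr2]; ring
        rw [this, sub_self, sub_zero, ← mul_assoc, hx, one_mul]
    · -- letter R
      obtain ⟨hfs, hgs⟩ := fv_gv_succ_R α c n heven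
      have hrel : fv α c n = u * gv α c n := by
        have := hinv; rw [if_neg heven] at this; exact this
      have hgpos' : 0 < gv α c (n + 1) := by rw [hgs]; exact hgpos
      have hfpos' : 0 < fv α c (n + 1) := by
        rw [hfs, hrel]
        have : (u - 1) * gv α c n > 0 := mul_pos (by linarith) hgpos
        linarith
      refine ⟨hfpos', hgpos', ?_⟩
      by_cases hnext : n + 1 < Sb c (k + 1)
      · have hK' : Kb c (n + 1) = k := Kb_eq c hc k (n + 1) (le_trans hspec.1 (Nat.le_succ n)) hnext
        rw [hK', if_neg heven, hfs, hgs, hrel]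
        push_cast
        ring
      · have hn1 : n + 1 = Sb c (k + 1) := by omega
        have hK' : Kb c (n + 1) = k + 1 := by
          refine Kb_eq c hc (k + 1) (n + 1) (le_of_eq hn1.symm) ?_
          rw [Sb_succ c (k + 1)]
          have := hc (k + 1) (by omega)
          omega
        have heven1 : (k + 1) % 2 = 0 := by omega
        rw [hK', if_pos heven1, hfs, hgs, hrel]
        have hcast : ((n : ℝ) + 1) = (Sb c (k + 1) : ℝ) := by exact_mod_cast congrArg (Nat.cast : ℕ → ℝ) hn1
        have hjend : (n : ℝ) - (Sb c k : ℝ) = (c k : ℝ) - 1 := by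
          have := Sb_succ c k
          have h2 : (Sb c (k+1) : ℝ) = (Sb c k : ℝ) + (c k : ℝ) := by exact_mod_cast this
          linarith
        have hfr2 : u - 1 = Int.fract (cfXi α k) := by rw [hu, hjend]; linarith
        push_cast
        rw [hcast]
        have : u * gv α c n - gv α c n = Int.fract (cfXi α k) * gv α c n := by
          rw [← hfr2]; ring
        rw [this, sub_self, sub_zero, ← mul_assoc, hx, one_mul]


/-! ### Determinant identity for f, g -/

lemma fg_det (α : ℝ) (c : ℕ → ℕ) (n : ℕ) :
    fv α c n * (pathMat (wordOf c) n 1 1 : ℝ)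
      + gv α c n * (pathMat (wordOf c) n 1 0 : ℝ) = 1 := by
  have h1 := pathMat_det c n
  have h2 : ((pathMat (wordOf c) n 0 0 : ℤ) : ℝ) * ((pathMat (wordOf c) n 1 1 : ℤ) : ℝ)
      - ((pathMat (wordOf c) n 0 1 : ℤ) : ℝ) * ((pathMat (wordOf c) n 1 0 : ℤ) : ℝ) = 1 := by
    exact_mod_cast congrArg (fun z : ℤ => (z : ℝ)) h1
  unfold fv gv
  linear_combination h2

/-! ### Factorization of the quadratic form -/

lemma Qval_factor (a h b : ℤ) (α β : ℝ) (ha : (a : ℝ) ≠ 0)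
    (hroot : (a : ℝ) * α ^ 2 + (h : ℝ) * α + (b : ℝ) = 0)
    (hβ : β = -(h : ℝ) / a - α) (x y : ℤ) :
    ((Qval a h b x y : ℤ) : ℝ) = a * ((x : ℝ) - α * y) * ((x : ℝ) - β * y) := by
  subst hβ
  have hb : (b : ℝ) = -((a : ℝ) * α ^ 2) - (h : ℝ) * α := by linarith
  unfold Qval
  push_cast
  rw [hb]
  field_simp
  ring

/-! ### Bound on the values along the two columns -/

lemma cols_bound (a h b : ℤ) (α : ℝ) (hpos : 0 < α) (hirr : Irrational α)
    (hroot : (a : ℝ) * α ^ 2 + (h : ℝ) * α + (b : ℝ) = 0)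
    (ha : a ≠ 0) :
    ∃ C : ℝ, 1 ≤ C ∧ ∀ n,
      (1 ≤ |((Qval a h b (pathMat (wordOf (cN α)) n 0 0) (pathMat (wordOf (cN α)) n 1 0) : ℤ) : ℝ)| ∧
        |((Qval a h b (pathMat (wordOf (cN α)) n 0 0) (pathMat (wordOf (cN α)) n 1 0) : ℤ) : ℝ)| ≤ C) ∧
      (1 ≤ |((Qval a h b (pathMat (wordOf (cN α)) n 0 1) (pathMat (wordOf (cN α)) n 1 1) : ℤ) : ℝ)| ∧
        |((Qval a h b (pathMat (wordOf (cN α)) n 0 1) (pathMat (wordOf (cN α)) n 1 1) : ℤ) : ℝ)| ≤ C) := by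
  have haR : (a : ℝ) ≠ 0 := Int.cast_ne_zero.mpr ha
  set β : ℝ := -(h : ℝ) / a - α with hβ
  have hβirr : Irrational β := by
    have hcast : β = ((((-h : ℤ) : ℚ) / ((a : ℤ) : ℚ) : ℚ) : ℝ) - α := by
      rw [hβ]; push_cast; ring
    rw [hcast]
    exact hirr.ratCast_sub _
  have hβne : ∀ x y : ℤ, y ≠ 0 → (x : ℝ) - β * y ≠ 0 := by
    intro x y hy heq
    apply Rat.not_irrational ((x : ℚ) / (y : ℚ))
    have hy' : (y : ℝ) ≠ 0 := Int.cast_ne_zero.mpr hy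
    have : (((x : ℚ) / (y : ℚ) : ℚ) : ℝ) = β := by
      push_cast
      field_simp
      linarith [heq]
    rw [this]; exact hβirr
  set δ : ℝ := |α - β| with hδ
  have hδ0 : 0 ≤ δ := abs_nonneg _
  set c : ℕ → ℕ := cN α with hcdef
  refine ⟨max (max ((a : ℝ) ^ 2 * (1 + δ) ^ 2) (max |(a : ℝ)| (|(a : ℝ)| * α * (α + δ)))) 1,
    le_max_right _ _, ?_⟩
  intro n
  set C : ℝ := max (max ((a : ℝ) ^ 2 * (1 + δ) ^ 2) (max |(a : ℝ)| (|(a : ℝ)| * α * (α + δ)))) 1 with hC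
  obtain ⟨hfpos, hgpos, _⟩ := main_inv α hpos hirr n
  rw [← hcdef] at hfpos hgpos
  obtain ⟨hent, hs1⟩ := pathMat_entries c n
  set p : ℤ := pathMat (wordOf c) n 0 0 with hp
  set q : ℤ := pathMat (wordOf c) n 0 1 with hq
  set r : ℤ := pathMat (wordOf c) n 1 0 with hr
  set s : ℤ := pathMat (wordOf c) n 1 1 with hs
  have hr0 : (0 : ℤ) ≤ r := hent 1 0
  have hq0 : (0 : ℤ) ≤ q := hent 0 1
  have hsR : (1 : ℝ) ≤ (s : ℝ) := by exact_mod_cast hs1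
  have hrR : (0 : ℝ) ≤ (r : ℝ) := by exact_mod_cast hr0
  have hdet := pathMat_det c n
  rw [← hp, ← hq, ← hr, ← hs] at hdet
  -- factor identities
  have hfvdef : fv α c n = (p : ℝ) - α * r := rfl
  have hgvdef : gv α c n = α * (s : ℝ) - q := rfl
  have hX : ((Qval a h b p r : ℤ) : ℝ) = a * ((p : ℝ) - α * r) * ((p : ℝ) - β * r) :=
    Qval_factor a h b α β haR hroot hβ p r
  have hY : ((Qval a h b q s : ℤ) : ℝ) = a * ((q : ℝ) - α * s) * ((q : ℝ) - β * s) :=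
    Qval_factor a h b α β haR hroot hβ q s
  have hfb : (0:ℝ) < (p : ℝ) - α * r := by have hcopy := hfpos; rw [hfvdef] at hcopy; exact hcopy
  have hgb : (0:ℝ) < α * (s : ℝ) - q := by have hcopy := hgpos; rw [hgvdef] at hcopy; exact hcopy
  have hXabs : |((Qval a h b p r : ℤ) : ℝ)| = |(a : ℝ)| * fv α c n * |(p : ℝ) - β * r| := by
    rw [hX, hfvdef, abs_mul, abs_mul, abs_of_pos hfb]
  have hYabs : |((Qval a h b q s : ℤ) : ℝ)| = |(a : ℝ)| * gv α c n * |(q : ℝ) - β * s| := by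
    have hqs : (q : ℝ) - α * s = -(α * (s:ℝ) - q) := by ring
    rw [hY, hgvdef, hqs, abs_mul, abs_mul, abs_neg, abs_of_pos hgb]
  -- nonvanishing
  have hYne : ((Qval a h b q s : ℤ) : ℝ) ≠ 0 := by
    rw [hY]
    have h1 : (q : ℝ) - α * s ≠ 0 := by
      rw [show (q : ℝ) - α * s = -(gv α c n) from by rw [hgvdef]; ring]
      exact neg_ne_zero.mpr (ne_of_gt hgpos)
    have h2 : (q : ℝ) - β * s ≠ 0 := hβne q s (by omega)
    exact mul_ne_zero (mul_ne_zero haR h1) h2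
  have hXne : ((Qval a h b p r : ℤ) : ℝ) ≠ 0 := by
    rw [hX]
    have h1 : (p : ℝ) - α * r ≠ 0 := by
      rw [← hfvdef]; exact ne_of_gt hfpos
    have h2 : (p : ℝ) - β * r ≠ 0 := by
      by_cases hrz : r = 0
      · rw [hrz]
        push_cast
        rw [mul_zero, sub_zero]
        have : fv α c n = (p : ℝ) := by rw [hfvdef, hrz]; push_cast; ring
        rw [← this]; exact ne_of_gt hfpos
      · exact hβne p r hrz
    exact mul_ne_zero (mul_ne_zero haR h1) h2
  have hXge : 1 ≤ |((Qval a h b p r : ℤ) : ℝ)| := by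
    have : Qval a h b p r ≠ 0 := by
      intro hz; apply hXne; rw [hz]; simp
    have := Int.one_le_abs this
    exact_mod_cast this
  have hYge : 1 ≤ |((Qval a h b q s : ℤ) : ℝ)| := by
    have : Qval a h b q s ≠ 0 := by
      intro hz; apply hYne; rw [hz]; simp
    have := Int.one_le_abs this
    exact_mod_cast this
  -- bounds on the β-factors
  have hβf : |(p : ℝ) - β * r| ≤ fv α c n + δ * r := by
    have : (p : ℝ) - β * r = ((p : ℝ) - α * r) + (α - β) * r := by ring
    rw [this]
    calc |((p : ℝ) - α * r) + (α - β) * r| ≤ |(p : ℝ) - α * r| + |(α - β) * r| := abs_add_le _ _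
      _ = fv α c n + δ * r := by
          rw [abs_mul, abs_of_nonneg hrR, ← hδ, ← hfvdef,
            abs_of_pos (by rw [hfvdef] at hfpos ⊢; exact hfpos)]
  have hβg : |(q : ℝ) - β * s| ≤ gv α c n + δ * s := by
    have : (q : ℝ) - β * s = -((α * s - q)) + (α - β) * s := by ring
    rw [this]
    calc |(-(α * (s:ℝ) - q)) + (α - β) * s| ≤ |(-(α * (s:ℝ) - q))| + |(α - β) * s| := abs_add_le _ _
      _ = gv α c n + δ * s := by
          rw [abs_neg, abs_mul, abs_of_nonneg (by linarith : (0:ℝ) ≤ (s:ℝ)), ← hδ, ← hgvdef,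
            abs_of_pos hgpos]
  -- the determinant relation
  have hdet2 : fv α c n * (s : ℝ) + gv α c n * (r : ℝ) = 1 := by
    have := fg_det α c n
    rw [← hr, ← hs] at this
    exact this
  have hfs1 : fv α c n * (s : ℝ) ≤ 1 := by
    linarith [hdet2, mul_nonneg (le_of_lt hgpos) hrR]
  have hgr1 : gv α c n * (r : ℝ) ≤ 1 := by
    linarith [hdet2, mul_nonneg (le_of_lt hfpos) (by linarith : (0:ℝ) ≤ (s:ℝ))]
  by_cases hrz : r = 0
  · -- initial block : p = 1, s = 1
    have hps : p = 1 ∧ s = 1 := by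
      have hdet' : p * s = 1 := by rw [hrz] at hdet; linarith [hdet]
      rcases Int.mul_eq_one_iff_eq_one_or_neg_one.mp hdet' with ⟨h1, h2⟩ | ⟨h1, h2⟩
      · exact ⟨h1, h2⟩
      · exfalso; have := hent 0 0; rw [← hp] at this; omega
    obtain ⟨hp1, hs1'⟩ := hps
    constructor
    · refine ⟨hXge, ?_⟩
      have : |((Qval a h b p r : ℤ) : ℝ)| = |(a : ℝ)| := by
        rw [hp1, hrz]
        unfold Qval
        push_cast
        norm_num
      rw [this, hC]
      calc |(a:ℝ)| ≤ max |(a : ℝ)| (|(a : ℝ)| * α * (α + δ)) := le_max_left _ _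
        _ ≤ _ := le_trans (le_max_right _ _) (le_max_left _ _)
    · refine ⟨hYge, ?_⟩
      have hsR1 : (s : ℝ) = 1 := by rw [hs1']; norm_num
      have hgv_le : gv α c n ≤ α := by
        rw [hgvdef, hsR1]
        have : (0:ℝ) ≤ (q : ℝ) := by exact_mod_cast hq0
        linarith
      have hαδ : (0:ℝ) ≤ α + δ := by linarith
      have hβg' : |(q : ℝ) - β * (s:ℝ)| ≤ α + δ := by
        rw [hsR1] at hβg ⊢
        linarith
      rw [hYabs]
      calc |(a : ℝ)| * gv α c n * |(q : ℝ) - β * s|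
          ≤ |(a : ℝ)| * gv α c n * (α + δ) :=
            mul_le_mul_of_nonneg_left hβg' (mul_nonneg (abs_nonneg _) hgpos.le)
        _ ≤ |(a : ℝ)| * α * (α + δ) :=
            mul_le_mul_of_nonneg_right
              (mul_le_mul_of_nonneg_left hgv_le (abs_nonneg _)) hαδ
        _ ≤ C := by
            rw [hC]
            exact le_trans (le_trans (le_max_right _ _) (le_max_right _ _)) (le_max_left _ _)
  · -- generic case : 1 ≤ r
    have hr1 : (1 : ℝ) ≤ (r : ℝ) := by
      have : (1 : ℤ) ≤ r := by omega
      exact_mod_cast this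
    have hfv1 : fv α c n ≤ 1 := by
      have h1 : fv α c n * 1 ≤ fv α c n * (s : ℝ) :=
        mul_le_mul_of_nonneg_left hsR (le_of_lt hfpos)
      linarith
    have hgv1 : gv α c n ≤ 1 := by
      have h1 : gv α c n * 1 ≤ gv α c n * (r : ℝ) :=
        mul_le_mul_of_nonneg_left hr1 (le_of_lt hgpos)
      linarith
    set F := fv α c n
    set G := gv α c n
    have hF0 : 0 ≤ F := le_of_lt hfpos
    have hG0 : 0 ≤ G := le_of_lt hgpos
    have hFG : F * G ≤ 1 := mul_le_one₀ hfv1 hG0 hgv1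
    have hFG0 : 0 ≤ F * G := mul_nonneg hF0 hG0
    have e1 : (F * G) * (F * G) ≤ 1 := mul_le_one₀ hFG hFG0 hFG
    have e2 : (F * (s:ℝ)) * (F * G) ≤ 1 := mul_le_one₀ hfs1 hFG0 hFG
    have e3 : (G * (r:ℝ)) * (F * G) ≤ 1 := mul_le_one₀ hgr1 hFG0 hFG
    have e4 : (F * (s:ℝ)) * (G * (r:ℝ)) ≤ 1 :=
      mul_le_one₀ hfs1 (mul_nonneg hG0 hrR) hgr1
    have e2' : δ * ((F * (s:ℝ)) * (F * G)) ≤ δ := by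
      have := mul_le_mul_of_nonneg_left e2 hδ0; simpa using this
    have e3' : δ * ((G * (r:ℝ)) * (F * G)) ≤ δ := by
      have := mul_le_mul_of_nonneg_left e3 hδ0; simpa using this
    have e4' : (δ * δ) * ((F * (s:ℝ)) * (G * (r:ℝ))) ≤ δ * δ := by
      have := mul_le_mul_of_nonneg_left e4 (mul_nonneg hδ0 hδ0); simpa using this
    -- product bound
    have hFδr : (0:ℝ) ≤ F + δ * r := by
      have := mul_nonneg hδ0 hrR; linarith
    have hGδs : (0:ℝ) ≤ G + δ * s := by
      have := mul_nonneg hδ0 (le_trans zero_le_one hsR); linarith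
    have hprod : (|(a : ℝ)| * F * |(p : ℝ) - β * r|) * (|(a : ℝ)| * G * |(q : ℝ) - β * s|)
        ≤ (a : ℝ) ^ 2 * (1 + δ) ^ 2 := by
      have hb1 : |(a : ℝ)| * F * |(p : ℝ) - β * r| ≤ |(a : ℝ)| * (F * (F + δ * r)) := by
        rw [mul_assoc]
        exact mul_le_mul_of_nonneg_left
          (mul_le_mul_of_nonneg_left hβf (le_of_lt hfpos)) (abs_nonneg _)
      have hb2 : |(a : ℝ)| * G * |(q : ℝ) - β * s| ≤ |(a : ℝ)| * (G * (G + δ * s)) := by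
        rw [mul_assoc]
        exact mul_le_mul_of_nonneg_left
          (mul_le_mul_of_nonneg_left hβg (le_of_lt hgpos)) (abs_nonneg _)
      have hbig : (F * (F + δ * r)) * (G * (G + δ * s)) ≤ (1 + δ) ^ 2 := by
        have expand : (F * (F + δ * r)) * (G * (G + δ * s))
            = (F * G) * (F * G) + δ * ((F * (s:ℝ)) * (F * G))
              + δ * ((G * (r:ℝ)) * (F * G)) + (δ * δ) * ((F * (s:ℝ)) * (G * (r:ℝ))) := by
          ring
        have hrhs : (1 + δ) ^ 2 = 1 + δ + δ + δ * δ := by ring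
        rw [expand, hrhs]
        exact add_le_add (add_le_add (add_le_add e1 e2') e3') e4'
      have hsq : |(a:ℝ)| * |(a:ℝ)| = (a:ℝ)^2 := by rw [← abs_mul, abs_mul_self]; ring
      have hnn1 : (0:ℝ) ≤ |(a : ℝ)| * G * |(q : ℝ) - β * s| :=
        mul_nonneg (mul_nonneg (abs_nonneg _) hG0) (abs_nonneg _)
      have hnn2 : (0:ℝ) ≤ |(a : ℝ)| * (F * (F + δ * r)) :=
        mul_nonneg (abs_nonneg _) (mul_nonneg hF0 hFδr)
      calc (|(a : ℝ)| * F * |(p : ℝ) - β * r|) * (|(a : ℝ)| * G * |(q : ℝ) - β * s|)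
          ≤ (|(a : ℝ)| * (F * (F + δ * r))) * (|(a : ℝ)| * (G * (G + δ * s))) :=
            mul_le_mul hb1 hb2 hnn1 hnn2
        _ = (a:ℝ)^2 * ((F * (F + δ * r)) * (G * (G + δ * s))) := by
            rw [← hsq]; ring
        _ ≤ (a : ℝ) ^ 2 * (1 + δ) ^ 2 :=
            mul_le_mul_of_nonneg_left hbig (by positivity)
    -- each factor is ≥ 1, hence each ≤ the product
    have hXY : |((Qval a h b p r : ℤ) : ℝ)| * |((Qval a h b q s : ℤ) : ℝ)|
        ≤ (a : ℝ) ^ 2 * (1 + δ) ^ 2 := by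
      rw [hXabs, hYabs]; exact hprod
    have hCbound : (a : ℝ) ^ 2 * (1 + δ) ^ 2 ≤ C := by
      rw [hC]
      exact le_trans (le_max_left _ _) (le_max_left _ _)
    constructor
    · refine ⟨hXge, ?_⟩
      have h1 : |((Qval a h b p r : ℤ) : ℝ)| * 1 ≤
          |((Qval a h b p r : ℤ) : ℝ)| * |((Qval a h b q s : ℤ) : ℝ)| :=
        mul_le_mul_of_nonneg_left hYge (abs_nonneg _)
      linarith
    · refine ⟨hYge, ?_⟩
      have h1 : 1 * |((Qval a h b q s : ℤ) : ℝ)| ≤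
          |((Qval a h b p r : ℤ) : ℝ)| * |((Qval a h b q s : ℤ) : ℝ)| :=
        mul_le_mul_of_nonneg_right hXge (abs_nonneg _)
      linarith


/-- For an indefinite integer binary quadratic form `Q` whose discriminant is
positive and not a perfect square, and an irrational root `α ∈ (0,∞)` of `Q(α,1)=0`, the
values of `Q` along the word `w_α` associated to the continued fraction expansion of `α`
(the path leading to the end of the Conway river) have zero growth: `Λ_Q(w_α) = 0`. -/
theorem lyapunov_vanishes_on_river (a h b : ℤ)
    (hD : 0 < h ^ 2 - 4 * a * b) (hns : ¬ IsSquare (h ^ 2 - 4 * a * b))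
    (α : ℝ) (hpos : 0 < α) (hirr : Irrational α)
    (hroot : (a : ℝ) * α ^ 2 + (h : ℝ) * α + (b : ℝ) = 0) :
    LyapQ a h b (wordOfCF α) = 0 := by
  -- a ≠ 0
  have ha : a ≠ 0 := by
    intro haz
    subst haz
    have hh : h ≠ 0 := by
      intro hhz; subst hhz; norm_num at hD
    have hhR : (h : ℝ) ≠ 0 := Int.cast_ne_zero.mpr hh
    have hα : α = -(b : ℝ) / (h : ℝ) := by
      push_cast at hroot
      ring_nf at hroot
      field_simp
      linarith
    have : α = ((((-b : ℤ) : ℚ) / ((h : ℤ) : ℚ) : ℚ) : ℝ) := by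
      rw [hα]; push_cast; ring
    exact Rat.not_irrational _ (this ▸ hirr)
  have hw : wordOfCF α = wordOf (cN α) := rfl
  set c : ℕ → ℕ := cN α with hcdef
  have hc : ∀ i, 1 ≤ i → 1 ≤ c i := by
    intro i hi
    match i, hi with
    | m + 1, _ => exact cN_pos hirr m
  obtain ⟨C, hC1, hCb⟩ := cols_bound a h b α hpos hirr hroot ha
  rw [← hcdef] at hCb
  -- cast of Qnorm
  have hQcast : ∀ n, ((Qnorm a h b (wordOf c) n : ℤ) : ℝ)
      = max |((Qval a h b (pathMat (wordOf c) n 0 0) (pathMat (wordOf c) n 1 0) : ℤ) : ℝ)|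
          (max |((Qval a h b (pathMat (wordOf c) n 0 1) (pathMat (wordOf c) n 1 1) : ℤ) : ℝ)|
            |((Qval a h b (pathMat (wordOf c) n 0 0 + pathMat (wordOf c) n 0 1)
                (pathMat (wordOf c) n 1 0 + pathMat (wordOf c) n 1 1) : ℤ) : ℝ)|) := by
    intro n
    unfold Qnorm
    push_cast
    rfl
  -- lower bound 1 ≤ Qnorm and upper bound Qnorm ≤ C
  have hlow : ∀ n, (1 : ℝ) ≤ ((Qnorm a h b (wordOf c) n : ℤ) : ℝ) := by
    intro n
    rw [hQcast n]
    exact le_trans ((hCb n).1.1 |>.trans_eq rfl) (le_max_left _ _)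
  have hupp : ∀ n, ((Qnorm a h b (wordOf c) n : ℤ) : ℝ) ≤ C := by
    intro n
    rw [hQcast n]
    -- the third (superbase-sum) value is a column value at time n+1
    have hZ : |((Qval a h b (pathMat (wordOf c) n 0 0 + pathMat (wordOf c) n 0 1)
        (pathMat (wordOf c) n 1 0 + pathMat (wordOf c) n 1 1) : ℤ) : ℝ)| ≤ C := by
      by_cases hL : Kb c n % 2 = 0
      · obtain ⟨e1, e2, e3, e4⟩ := mul_L (pathMat (wordOf c) n)
        have hstep : pathMat (wordOf c) (n + 1) = pathMat (wordOf c) n * Lm := by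
          rw [pathMat_succ, wordOf_eq, if_pos hL]
        have h1 : pathMat (wordOf c) (n + 1) 0 1
            = pathMat (wordOf c) n 0 0 + pathMat (wordOf c) n 0 1 := by rw [hstep]; exact e2
        have h2 : pathMat (wordOf c) (n + 1) 1 1
            = pathMat (wordOf c) n 1 0 + pathMat (wordOf c) n 1 1 := by rw [hstep]; exact e4
        rw [← h1, ← h2]
        exact (hCb (n + 1)).2.2
      · obtain ⟨e1, e2, e3, e4⟩ := mul_R (pathMat (wordOf c) n)
        have hstep : pathMat (wordOf c) (n + 1) = pathMat (wordOf c) n * Rm := by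
          rw [pathMat_succ, wordOf_eq, if_neg hL]
        have h1 : pathMat (wordOf c) (n + 1) 0 0
            = pathMat (wordOf c) n 0 0 + pathMat (wordOf c) n 0 1 := by rw [hstep]; exact e1
        have h2 : pathMat (wordOf c) (n + 1) 1 0
            = pathMat (wordOf c) n 1 0 + pathMat (wordOf c) n 1 1 := by rw [hstep]; exact e3
        rw [← h1, ← h2]
        exact (hCb (n + 1)).1.2
    exact max_le (hCb n).1.2 (max_le (hCb n).2.2 hZ)
  -- the sequence log (Qnorm n) / n tends to 0
  have htend : Filter.Tendsto
      (fun n : ℕ => Real.log ((Qnorm a h b (wordOf c) n : ℤ) : ℝ) / (n : ℝ))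
      Filter.atTop (nhds 0) := by
    have hge : (fun _ : ℕ => (0 : ℝ))
        ≤ fun n : ℕ => Real.log ((Qnorm a h b (wordOf c) n : ℤ) : ℝ) / (n : ℝ) := by
      intro n
      exact div_nonneg (Real.log_nonneg (hlow n)) (Nat.cast_nonneg n)
    have hle : (fun n : ℕ => Real.log ((Qnorm a h b (wordOf c) n : ℤ) : ℝ) / (n : ℝ))
        ≤ fun n : ℕ => Real.log C / (n : ℝ) := by
      intro n
      exact div_le_div_of_nonneg_right
        (Real.log_le_log (by linarith [hlow n]) (hupp n)) (Nat.cast_nonneg n)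
    exact tendsto_of_tendsto_of_tendsto_of_le_of_le tendsto_const_nhds
      (tendsto_const_div_atTop_nhds_zero_nat (Real.log C)) hge hle
  rw [hw]
  unfold LyapQ
  exact htend.limsup_eq

end
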